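/- Let d ≥ 2 and let a, b : ℝ^d_{++} → ℝ be convex and positively homogeneous of degree 1. Let P̄ ⊆ ℝ^d_{++} be nonempty, convex, and compact, and define A = {y ∈ ℝ^d : p·y ≤ a(p) for all p ∈ P̄} and B = {y ∈ ℝ^d : p·y ≤ b(p) for all p ∈ P̄}. Then the Hausdorff distance between A and B satisfies d_H(A, B) = sup_{p∈P̄} |a(p/‖p‖) − b(p/‖p‖)|. -/

import Mathlib

open scoped RealInnerProductSpace

/-- The strictly positive orthant of `ℝ^d`. -/
def posOrthant (d : ℕ) : Set (EuclideanSpace ℝ (Fin d)) := {p | ∀ i, 0 < p i}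

namespace Stmt5Aux

variable {d : ℕ}

lemma isOpen_posOrthant (d : ℕ) : IsOpen (posOrthant d) := by
  have h : posOrthant d =
      ⋂ i, (fun p : EuclideanSpace ℝ (Fin d) => p i) ⁻¹' Set.Ioi 0 := by
    ext p; simp [posOrthant]
  rw [h]
  exact isOpen_iInter_of_finite fun i =>
    isOpen_Ioi.preimage (EuclideanSpace.proj i).continuous

lemma convex_posOrthant (d : ℕ) : Convex ℝ (posOrthant d) := by
  intro p hp q hq s t hs ht hst
  intro i
  have h1 : (s • p + t • q) i = s * p i + t * q i := rfl
  rw [h1]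
  rcases hs.lt_or_eq with h | h
  · exact add_pos_of_pos_of_nonneg (mul_pos h (hp i)) (mul_nonneg ht (hq i).le)
  · have ht1 : t = 1 := by linarith
    rw [← h, ht1]; simpa using hq i

lemma smul_mem_posOrthant {p : EuclideanSpace ℝ (Fin d)} (hp : p ∈ posOrthant d)
    {l : ℝ} (hl : 0 < l) : l • p ∈ posOrthant d := by
  intro i
  have h1 : (l • p) i = l * p i := rfl
  rw [h1]; exact mul_pos hl (hp i)

lemma norm_pos_of_mem_posOrthant (hd : 0 < d) {p : EuclideanSpace ℝ (Fin d)}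
    (hp : p ∈ posOrthant d) : 0 < ‖p‖ := by
  rw [norm_pos_iff]
  intro h0
  have := hp ⟨0, hd⟩
  rw [h0] at this
  simpa using this

/-- Existence of a support point: for a convex, positively homogeneous function on the open
positive orthant, at each point there is a linear functional (vector) dominated by `a` and
touching at the point. -/
lemma exists_support_point (a : EuclideanSpace ℝ (Fin d) → ℝ)
    (haconv : ConvexOn ℝ (posOrthant d) a)
    (hahom : ∀ p ∈ posOrthant d, ∀ l : ℝ, 0 < l → a (l • p) = l * a p)
    {p0 : EuclideanSpace ℝ (Fin d)} (hp0 : p0 ∈ posOrthant d) :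
    ∃ y : EuclideanSpace ℝ (Fin d),
      (∀ q ∈ posOrthant d, ⟪q, y⟫ ≤ a q) ∧ ⟪p0, y⟫ = a p0 := by
  classical
  set S : Set (EuclideanSpace ℝ (Fin d) × ℝ) :=
    {x | x.1 ∈ posOrthant d ∧ a x.1 < x.2} with hSdef
  have hSconv : Convex ℝ S := by
    rintro ⟨q1, t1⟩ ⟨hq1, ht1⟩ ⟨q2, t2⟩ ⟨hq2, ht2⟩ s t hs ht hst
    have hmem : s • q1 + t • q2 ∈ posOrthant d := convex_posOrthant d hq1 hq2 hs ht hst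
    have hcv := haconv.2 hq1 hq2 hs ht hst
    have hlt : s * a q1 + t * a q2 < s * t1 + t * t2 := by
      rcases hs.lt_or_eq with h | h
      · have h1 : 0 < s * (t1 - a q1) := mul_pos h (sub_pos.2 ht1)
        have h2 : 0 ≤ t * (t2 - a q2) := mul_nonneg ht (sub_pos.2 ht2).le
        nlinarith
      · have ht' : t = 1 := by linarith
        have h2 : 0 < t * (t2 - a q2) := by rw [ht']; simpa using sub_pos.2 ht2
        have h1 : 0 ≤ s * (t1 - a q1) := mul_nonneg hs (sub_pos.2 ht1).le
        nlinarith
    refine ⟨hmem, ?_⟩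
    calc a (s • q1 + t • q2) ≤ s • a q1 + t • a q2 := hcv
      _ = s * a q1 + t * a q2 := by simp [smul_eq_mul]
      _ < s * t1 + t * t2 := hlt
  have hacont : ContinuousOn a (posOrthant d) := haconv.continuousOn (isOpen_posOrthant d)
  have hSopen : IsOpen S := by
    have h1 : IsOpen {x : EuclideanSpace ℝ (Fin d) × ℝ | x.1 ∈ posOrthant d} :=
      (isOpen_posOrthant d).preimage continuous_fst
    have h2 : ContinuousOn (fun x : EuclideanSpace ℝ (Fin d) × ℝ => x.2 - a x.1)
        {x : EuclideanSpace ℝ (Fin d) × ℝ | x.1 ∈ posOrthant d} := by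
      refine ContinuousOn.sub continuous_snd.continuousOn ?_
      exact hacont.comp continuous_fst.continuousOn (fun x hx => hx)
    have h3 := h2.isOpen_inter_preimage h1 (isOpen_Ioi (a := (0:ℝ)))
    have h4 : S = {x : EuclideanSpace ℝ (Fin d) × ℝ | x.1 ∈ posOrthant d} ∩
        (fun x : EuclideanSpace ℝ (Fin d) × ℝ => x.2 - a x.1) ⁻¹' Set.Ioi 0 := by
      ext x
      simp only [hSdef, Set.mem_setOf_eq, Set.mem_inter_iff, Set.mem_preimage,
        Set.mem_Ioi, sub_pos]
    rw [h4]; exact h3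
  have hnot : (p0, a p0) ∉ S := fun h => lt_irrefl _ h.2
  obtain ⟨f, u, hfS, hfp⟩ := geometric_hahn_banach_open hSconv hSopen
    (convex_singleton (p0, a p0)) (Set.disjoint_singleton_right.2 hnot)
  have hu0 : u ≤ f (p0, a p0) := hfp _ rfl
  set c : ℝ := f (0, 1) with hcdef
  have hdec : ∀ (q : EuclideanSpace ℝ (Fin d)) (t : ℝ), f (q, t) = f (q, 0) + t * c := by
    intro q t
    have h1 : ((q, t) : EuclideanSpace ℝ (Fin d) × ℝ)
        = (q, (0 : ℝ)) + t • ((0 : EuclideanSpace ℝ (Fin d)), (1 : ℝ)) := by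
      simp [Prod.ext_iff]
    rw [h1, map_add, map_smul, smul_eq_mul]
  have hB' : ∀ q ∈ posOrthant d, f (q, 0) + a q * c ≤ u := by
    intro q hq
    have htend : Filter.Tendsto (fun t : ℝ => f (q, 0) + t * c) (nhdsWithin (a q) (Set.Ioi (a q)))
        (nhds (f (q, 0) + a q * c)) := by
      refine Filter.Tendsto.mono_left ?_ nhdsWithin_le_nhds
      exact ((continuous_const.add (continuous_id.mul continuous_const)).tendsto (a q))
    refine le_of_tendsto htend ?_
    filter_upwards [self_mem_nhdsWithin] with t ht
    have := hfS (q, t) ⟨hq, ht⟩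
    rw [hdec] at this
    exact this.le
  have hCeq : u = f (p0, 0) + a p0 * c := by
    have h1 := hB' p0 hp0
    have h2 := hu0
    rw [hdec] at h2
    exact le_antisymm h2 h1
  have hclt : c < 0 := by
    have h1 := hfS (p0, a p0 + 1) ⟨hp0, lt_add_one (a p0)⟩
    rw [hdec] at h1
    have h2 : f (p0, (0:ℝ)) + (a p0 + 1) * c = f (p0, (0:ℝ)) + a p0 * c + c := by ring
    linarith
  have hmc : 0 < -c := neg_pos.2 hclt
  -- homogeneity forces the supporting level to be zero
  have hw : f (p0, (0 : ℝ)) + a p0 * c = 0 := by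
    have h2 : ∀ l : ℝ, 0 < l → l * (f (p0, (0:ℝ)) + a p0 * c) ≤ f (p0, (0:ℝ)) + a p0 * c := by
      intro l hl
      have hmem := smul_mem_posOrthant hp0 hl
      have h3 := hB' _ hmem
      have h4 : f ((l • p0 : EuclideanSpace ℝ (Fin d)), (0 : ℝ)) = l * f (p0, (0:ℝ)) := by
        have h5 : ((l • p0 : EuclideanSpace ℝ (Fin d)), (0 : ℝ))
            = l • ((p0 : EuclideanSpace ℝ (Fin d)), (0 : ℝ)) := by
          simp [Prod.ext_iff]
        rw [h5, map_smul, smul_eq_mul]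
      rw [h4, hahom p0 hp0 l hl, hCeq] at h3
      nlinarith [h3]
    have ha2 := h2 2 (by norm_num)
    have hb2 := h2 (1/2) (by norm_num)
    linarith
  have hu_eq : u = 0 := hCeq.trans hw
  -- build the support vector
  set g : EuclideanSpace ℝ (Fin d) →L[ℝ] ℝ :=
    (-c)⁻¹ • (f.comp (ContinuousLinearMap.inl ℝ (EuclideanSpace ℝ (Fin d)) ℝ)) with hgdef
  set y : EuclideanSpace ℝ (Fin d) := (InnerProductSpace.toDual ℝ _).symm g with hydef
  have hy : ∀ q : EuclideanSpace ℝ (Fin d), ⟪y, q⟫ = (-c)⁻¹ * f (q, 0) := by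
    intro q
    rw [hydef, InnerProductSpace.toDual_symm_apply]
    simp [hgdef]
  have hyp0 : ⟪y, p0⟫ = a p0 := by
    rw [hy p0]
    have h6 : f (p0, (0:ℝ)) = a p0 * (-c) := by linarith
    rw [h6]
    field_simp [hclt.ne]
  have hyq : ∀ q ∈ posOrthant d, ⟪y, q⟫ ≤ a q := by
    intro q hq
    have h3 := hB' q hq
    rw [hu_eq] at h3
    rw [hy q, inv_mul_eq_div, div_le_iff₀ hmc]
    nlinarith
  exact ⟨y, fun q hq => by rw [real_inner_comm]; exact hyq q hq,
    by rw [real_inner_comm]; exact hyp0⟩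

/-- The cone generated by `Pb` (including `0`). -/
def posCone (Pb : Set (EuclideanSpace ℝ (Fin d))) : Set (EuclideanSpace ℝ (Fin d)) :=
  {x | ∃ l : ℝ, 0 ≤ l ∧ ∃ p ∈ Pb, x = l • p}

lemma convex_posCone {Pb : Set (EuclideanSpace ℝ (Fin d))} (hPbconv : Convex ℝ Pb) :
    Convex ℝ (posCone Pb) := by
  rintro x ⟨l1, hl1, p1, hp1, rfl⟩ y ⟨l2, hl2, p2, hp2, rfl⟩ s t hs ht hst
  by_cases hL : s * l1 + t * l2 = 0
  · have h1 : s * l1 = 0 := by nlinarith [mul_nonneg hs hl1, mul_nonneg ht hl2]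
    have h2 : t * l2 = 0 := by nlinarith [mul_nonneg hs hl1, mul_nonneg ht hl2]
    refine ⟨0, le_refl 0, p1, hp1, ?_⟩
    simp [smul_smul, h1, h2]
  · have hLpos : 0 < s * l1 + t * l2 :=
      lt_of_le_of_ne (add_nonneg (mul_nonneg hs hl1) (mul_nonneg ht hl2)) (Ne.symm hL)
    refine ⟨s * l1 + t * l2, hLpos.le,
      (s * l1 / (s * l1 + t * l2)) • p1 + (t * l2 / (s * l1 + t * l2)) • p2,
      hPbconv hp1 hp2 (div_nonneg (mul_nonneg hs hl1) hLpos.le)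
        (div_nonneg (mul_nonneg ht hl2) hLpos.le)
        (by rw [← add_div, div_self hL]), ?_⟩
    rw [smul_add, smul_smul, smul_smul, smul_smul, smul_smul]
    have e1 : (s * l1 + t * l2) * (s * l1 / (s * l1 + t * l2)) = s * l1 := by
      field_simp
    have e2 : (s * l1 + t * l2) * (t * l2 / (s * l1 + t * l2)) = t * l2 := by
      field_simp
    rw [e1, e2]

lemma isClosed_posCone (hd : 0 < d) {Pb : Set (EuclideanSpace ℝ (Fin d))}
    (hPbne : Pb.Nonempty) (hPbcomp : IsCompact Pb) (hPbpos : Pb ⊆ posOrthant d) :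
    IsClosed (posCone Pb) := by
  obtain ⟨p0, hp0Pb, hp0min⟩ := hPbcomp.exists_isMinOn hPbne continuous_norm.continuousOn
  set m : ℝ := ‖p0‖ with hmdef
  have hm0 : 0 < m := norm_pos_of_mem_posOrthant hd (hPbpos hp0Pb)
  have hm : ∀ p ∈ Pb, m ≤ ‖p‖ := fun p hp => hp0min hp
  apply isClosed_of_closure_subset
  intro x hx
  obtain ⟨v, hv, hvx⟩ := mem_closure_iff_seq_limit.1 hx
  set T : ℝ := (‖x‖ + 1) / m with hTdef
  set K : Set (EuclideanSpace ℝ (Fin d)) :=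
    (fun z : ℝ × EuclideanSpace ℝ (Fin d) => z.1 • z.2) '' (Set.Icc (0:ℝ) T ×ˢ Pb) with hKdef
  have hK : IsCompact K :=
    (isCompact_Icc.prod hPbcomp).image (continuous_fst.smul continuous_snd)
  have hmem : ∀ᶠ n in Filter.atTop, v n ∈ K := by
    have hnorm : ∀ᶠ n in Filter.atTop, ‖v n‖ < ‖x‖ + 1 :=
      hvx.norm.eventually_lt_const (lt_add_one _)
    filter_upwards [hnorm] with n hn
    obtain ⟨l, hl, p, hp, hvp⟩ := hv n
    refine ⟨(l, p), ⟨⟨hl, ?_⟩, hp⟩, hvp.symm⟩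
    have h1 : m ≤ ‖p‖ := hm p hp
    have h2 : l * ‖p‖ = ‖v n‖ := by
      rw [hvp, norm_smul, Real.norm_of_nonneg hl]
    rw [hTdef, le_div_iff₀ hm0]
    nlinarith [mul_le_mul_of_nonneg_left h1 hl]
  have hxK : x ∈ K := hK.isClosed.mem_of_tendsto hvx hmem
  obtain ⟨⟨l, p⟩, ⟨⟨hl0, _⟩, hp⟩, heq⟩ := hxK
  exact ⟨l, hl0, p, hp, heq.symm⟩

lemma exists_sep (hd : 0 < d) {Pb : Set (EuclideanSpace ℝ (Fin d))}
    (hPbne : Pb.Nonempty) (hPbconv : Convex ℝ Pb) (hPbcomp : IsCompact Pb)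
    (hPbpos : Pb ⊆ posOrthant d) {u : EuclideanSpace ℝ (Fin d)} (hu : u ∉ posCone Pb) :
    ∃ v : EuclideanSpace ℝ (Fin d), (∀ p ∈ Pb, ⟪p, v⟫ ≤ 0) ∧ 0 < ⟪v, u⟫ := by
  obtain ⟨f, s, hfC, hfu⟩ := geometric_hahn_banach_closed_point
    (convex_posCone hPbconv) (isClosed_posCone hd hPbne hPbcomp hPbpos) hu
  have h0 : (0 : EuclideanSpace ℝ (Fin d)) ∈ posCone Pb := by
    obtain ⟨p, hp⟩ := hPbne
    exact ⟨0, le_refl _, p, hp, (zero_smul ℝ p).symm⟩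
  have hs0 : 0 < s := by
    have := hfC 0 h0; simpa using this
  have hneg : ∀ p ∈ Pb, f p ≤ 0 := by
    intro p hp
    by_contra hpos
    push_neg at hpos
    have hl : 0 ≤ (s + 1) / f p := div_nonneg (by linarith) hpos.le
    have h1 := hfC (((s + 1) / f p) • p) ⟨_, hl, p, hp, rfl⟩
    rw [map_smul, smul_eq_mul, div_mul_cancel₀ _ hpos.ne'] at h1
    linarith
  refine ⟨(InnerProductSpace.toDual ℝ _).symm f, fun p hp => ?_, ?_⟩
  · rw [real_inner_comm, InnerProductSpace.toDual_symm_apply]; exact hneg p hp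
  · rw [InnerProductSpace.toDual_symm_apply]; linarith

section Main

variable (a b : EuclideanSpace ℝ (Fin d) → ℝ) (Pb : Set (EuclideanSpace ℝ (Fin d)))

lemma continuousOn_absdiff (haconv : ConvexOn ℝ (posOrthant d) a)
    (hbconv : ConvexOn ℝ (posOrthant d) b) (hd : 0 < d) (hPbpos : Pb ⊆ posOrthant d) :
    ContinuousOn (fun p => |a (‖p‖⁻¹ • p) - b (‖p‖⁻¹ • p)|) Pb := by
  have hmaps : Set.MapsTo (fun p : EuclideanSpace ℝ (Fin d) => ‖p‖⁻¹ • p) Pb (posOrthant d) :=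
    fun p hp => smul_mem_posOrthant (hPbpos hp)
      (inv_pos.2 (norm_pos_of_mem_posOrthant hd (hPbpos hp)))
  have hn : ContinuousOn (fun p : EuclideanSpace ℝ (Fin d) => ‖p‖⁻¹ • p) Pb := by
    refine ContinuousOn.fun_smul ?_ continuousOn_id
    exact ContinuousOn.inv₀ continuous_norm.continuousOn
      (fun p hp => (norm_pos_of_mem_posOrthant hd (hPbpos hp)).ne')
  have hacont : ContinuousOn a (posOrthant d) := haconv.continuousOn (isOpen_posOrthant d)
  have hbcont : ContinuousOn b (posOrthant d) := hbconv.continuousOn (isOpen_posOrthant d)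
  exact ((hacont.comp hn hmaps).sub (hbcont.comp hn hmaps)).abs

lemma bddAbove_absdiff (haconv : ConvexOn ℝ (posOrthant d) a)
    (hbconv : ConvexOn ℝ (posOrthant d) b) (hd : 0 < d) (hPbcomp : IsCompact Pb)
    (hPbpos : Pb ⊆ posOrthant d) :
    BddAbove ((fun p => |a (‖p‖⁻¹ • p) - b (‖p‖⁻¹ • p)|) '' Pb) :=
  hPbcomp.bddAbove_image (continuousOn_absdiff a b Pb haconv hbconv hd hPbpos)

lemma convex_halfspaces :
    Convex ℝ {y : EuclideanSpace ℝ (Fin d) | ∀ p ∈ Pb, ⟪p, y⟫ ≤ b p} := by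
  intro y1 h1 y2 h2 s t hs ht hst
  intro p hp
  have e : ⟪p, s • y1 + t • y2⟫ = s * ⟪p, y1⟫ + t * ⟪p, y2⟫ := by
    rw [inner_add_right, real_inner_smul_right, real_inner_smul_right]
  rw [e]
  calc s * ⟪p, y1⟫ + t * ⟪p, y2⟫ ≤ s * b p + t * b p :=
        add_le_add (mul_le_mul_of_nonneg_left (h1 p hp) hs)
          (mul_le_mul_of_nonneg_left (h2 p hp) ht)
    _ = b p := by rw [← add_mul, hst, one_mul]

lemma isClosed_halfspaces :
    IsClosed {y : EuclideanSpace ℝ (Fin d) | ∀ p ∈ Pb, ⟪p, y⟫ ≤ b p} := by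
  have h : {y : EuclideanSpace ℝ (Fin d) | ∀ p ∈ Pb, ⟪p, y⟫ ≤ b p}
      = ⋂ p ∈ Pb, {y : EuclideanSpace ℝ (Fin d) | ⟪p, y⟫ ≤ b p} := by
    ext y; simp
  rw [h]
  refine isClosed_biInter fun p hp => isClosed_le ?_ continuous_const
  exact Continuous.inner continuous_const continuous_id

lemma nonempty_halfspaces (hbconv : ConvexOn ℝ (posOrthant d) b)
    (hbhom : ∀ p ∈ posOrthant d, ∀ l : ℝ, 0 < l → b (l • p) = l * b p)
    (hPbne : Pb.Nonempty) (hPbpos : Pb ⊆ posOrthant d) :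
    {y : EuclideanSpace ℝ (Fin d) | ∀ p ∈ Pb, ⟪p, y⟫ ≤ b p}.Nonempty := by
  obtain ⟨p1, hp1⟩ := hPbne
  obtain ⟨yb, hyb, -⟩ := exists_support_point b hbconv hbhom (hPbpos hp1)
  exact ⟨yb, fun q hq => hyb q (hPbpos hq)⟩

/-- Upper bound: every point of the `a`-set is within `M` of the `b`-set. -/
lemma exists_close (hd : 0 < d)
    (haconv : ConvexOn ℝ (posOrthant d) a)
    (hbconv : ConvexOn ℝ (posOrthant d) b)
    (hahom : ∀ p ∈ posOrthant d, ∀ l : ℝ, 0 < l → a (l • p) = l * a p)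
    (hbhom : ∀ p ∈ posOrthant d, ∀ l : ℝ, 0 < l → b (l • p) = l * b p)
    (hPbne : Pb.Nonempty) (hPbconv : Convex ℝ Pb) (hPbcomp : IsCompact Pb)
    (hPbpos : Pb ⊆ posOrthant d)
    {y : EuclideanSpace ℝ (Fin d)} (hy : ∀ p ∈ Pb, ⟪p, y⟫ ≤ a p) :
    ∃ z : EuclideanSpace ℝ (Fin d), (∀ p ∈ Pb, ⟪p, z⟫ ≤ b p) ∧
      dist y z ≤ sSup ((fun p => |a (‖p‖⁻¹ • p) - b (‖p‖⁻¹ • p)|) '' Pb) := by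
  set M := sSup ((fun p => |a (‖p‖⁻¹ • p) - b (‖p‖⁻¹ • p)|) '' Pb) with hMdef
  have hMbdd := bddAbove_absdiff a b Pb haconv hbconv hd hPbcomp hPbpos
  obtain ⟨p1, hp1⟩ := hPbne
  have hM0 : 0 ≤ M :=
    le_trans (abs_nonneg _) (le_csSup hMbdd ⟨p1, hp1, rfl⟩)
  set B := {z : EuclideanSpace ℝ (Fin d) | ∀ p ∈ Pb, ⟪p, z⟫ ≤ b p} with hBdef
  have hBconv : Convex ℝ B := convex_halfspaces b Pb
  have hBclosed : IsClosed B := isClosed_halfspaces b Pb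
  have hBne : B.Nonempty := nonempty_halfspaces b Pb hbconv hbhom ⟨p1, hp1⟩ hPbpos
  obtain ⟨z, hzB, hz⟩ :=
    exists_norm_eq_iInf_of_complete_convex hBne hBclosed.isComplete hBconv y
  have hproj : ∀ w ∈ B, ⟪y - z, w - z⟫ ≤ 0 :=
    (norm_eq_iInf_iff_real_inner_le_zero hBconv hzB).1 hz
  rcases eq_or_lt_of_le (norm_nonneg (y - z)) with hδ | hδ
  · exact ⟨z, hzB, by rw [dist_eq_norm, ← hδ]; exact hM0⟩
  · set δ := ‖y - z‖ with hδdef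
    set u : EuclideanSpace ℝ (Fin d) := δ⁻¹ • (y - z) with hudef
    have huC : u ∈ posCone Pb := by
      by_contra hu
      obtain ⟨v, hv1, hv2⟩ := exists_sep hd ⟨p1, hp1⟩ hPbconv hPbcomp hPbpos hu
      have hzv : z + v ∈ B := by
        intro p hp
        rw [inner_add_right]
        linarith [hzB p hp, hv1 p hp]
      have h1 := hproj (z + v) hzv
      rw [add_sub_cancel_left] at h1
      have h2 : ⟪v, u⟫ = δ⁻¹ * ⟪y - z, v⟫ := by
        rw [hudef, real_inner_smul_right, real_inner_comm]
      have h3 : δ⁻¹ * ⟪y - z, v⟫ ≤ 0 :=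
        mul_nonpos_of_nonneg_of_nonpos (inv_nonneg.2 hδ.le) h1
      rw [h2] at hv2
      linarith
    obtain ⟨l, hl0, p, hp, hup⟩ := huC
    have hpnorm : 0 < ‖p‖ := norm_pos_of_mem_posOrthant hd (hPbpos hp)
    have hunorm : ‖u‖ = 1 := by
      rw [hudef, norm_smul, Real.norm_of_nonneg (inv_nonneg.2 hδ.le)]
      exact inv_mul_cancel₀ hδ.ne'
    have hl : l = ‖p‖⁻¹ := by
      have h1 : l * ‖p‖ = 1 := by
        rw [← Real.norm_of_nonneg hl0, ← norm_smul, ← hup, hunorm]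
      exact eq_inv_of_mul_eq_one_left h1
    have hu_pos : u ∈ posOrthant d := by
      rw [hup]
      exact smul_mem_posOrthant (hPbpos hp)
        (lt_of_lt_of_le (inv_pos.2 hpnorm) (le_of_eq hl.symm))
    have key1 : ⟪u, y⟫ ≤ a u := by
      rw [hup, hl, real_inner_smul_left, hahom p (hPbpos hp) _ (inv_pos.2 hpnorm)]
      exact mul_le_mul_of_nonneg_left (hy p hp) (inv_nonneg.2 hpnorm.le)
    have key2 : b u ≤ ⟪u, z⟫ := by
      obtain ⟨yu, hyu1, hyu2⟩ := exists_support_point b hbconv hbhom hu_pos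
      have hyuB : yu ∈ B := fun q hq => hyu1 q (hPbpos hq)
      have h1 := hproj yu hyuB
      have h2 : ⟪u, yu - z⟫ ≤ 0 := by
        rw [hudef, real_inner_smul_left]
        exact mul_nonpos_of_nonneg_of_nonpos (inv_nonneg.2 hδ.le) h1
      rw [inner_sub_right, hyu2] at h2
      linarith
    have hδeq : δ = ⟪u, y - z⟫ := by
      rw [hudef, real_inner_smul_left, real_inner_self_eq_norm_mul_norm, ← hδdef]
      rw [inv_mul_cancel_left₀ hδ.ne']
    have hfin : δ ≤ M := by
      have h1 : ⟪u, y - z⟫ = ⟪u, y⟫ - ⟪u, z⟫ := inner_sub_right u y z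
      have h2 : δ ≤ a u - b u := by rw [hδeq, h1]; linarith
      have h3 : a u - b u ≤ |a (‖p‖⁻¹ • p) - b (‖p‖⁻¹ • p)| := by
        have : u = ‖p‖⁻¹ • p := by rw [hup, hl]
        rw [this]
        exact le_abs_self _
      exact h2.trans (h3.trans (le_csSup hMbdd ⟨p, hp, rfl⟩))
    exact ⟨z, hzB, by rw [dist_eq_norm]; exact hfin⟩

/-- Lower bound piece. -/
lemma lower_bound (hd : 0 < d)
    (haconv : ConvexOn ℝ (posOrthant d) a)
    (hbconv : ConvexOn ℝ (posOrthant d) b)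
    (hahom : ∀ p ∈ posOrthant d, ∀ l : ℝ, 0 < l → a (l • p) = l * a p)
    (hbhom : ∀ p ∈ posOrthant d, ∀ l : ℝ, 0 < l → b (l • p) = l * b p)
    (hPbne : Pb.Nonempty) (hPbpos : Pb ⊆ posOrthant d)
    (hfin : EMetric.hausdorffEdist
        {y : EuclideanSpace ℝ (Fin d) | ∀ p ∈ Pb, ⟪p, y⟫ ≤ a p}
        {y : EuclideanSpace ℝ (Fin d) | ∀ p ∈ Pb, ⟪p, y⟫ ≤ b p} ≠ ⊤)
    {p : EuclideanSpace ℝ (Fin d)} (hp : p ∈ Pb) :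
    a (‖p‖⁻¹ • p) - b (‖p‖⁻¹ • p) ≤ Metric.hausdorffDist
        {y : EuclideanSpace ℝ (Fin d) | ∀ p ∈ Pb, ⟪p, y⟫ ≤ a p}
        {y : EuclideanSpace ℝ (Fin d) | ∀ p ∈ Pb, ⟪p, y⟫ ≤ b p} := by
  have hpnorm : 0 < ‖p‖ := norm_pos_of_mem_posOrthant hd (hPbpos hp)
  set u : EuclideanSpace ℝ (Fin d) := ‖p‖⁻¹ • p with hudef
  have hu_pos : u ∈ posOrthant d := smul_mem_posOrthant (hPbpos hp) (inv_pos.2 hpnorm)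
  have hunorm : ‖u‖ = 1 := by
    rw [hudef, norm_smul, Real.norm_of_nonneg (inv_nonneg.2 hpnorm.le)]
    exact inv_mul_cancel₀ hpnorm.ne'
  obtain ⟨ya, hya1, hya2⟩ := exists_support_point a haconv hahom hu_pos
  have hyaA : ya ∈ {y : EuclideanSpace ℝ (Fin d) | ∀ p ∈ Pb, ⟪p, y⟫ ≤ a p} :=
    fun q hq => hya1 q (hPbpos hq)
  have hBne : {y : EuclideanSpace ℝ (Fin d) | ∀ p ∈ Pb, ⟪p, y⟫ ≤ b p}.Nonempty :=
    nonempty_halfspaces b Pb hbconv hbhom hPbne hPbpos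
  have hstep : ∀ z ∈ {y : EuclideanSpace ℝ (Fin d) | ∀ p ∈ Pb, ⟪p, y⟫ ≤ b p},
      a u - b u ≤ dist ya z := by
    intro z hz
    have h1 : ⟪p, z⟫ ≤ b p := hz p hp
    have hbp : b p = ‖p‖ * b u := by
      have h2 : (‖p‖ : ℝ) • u = p := by
        rw [hudef, smul_smul, mul_inv_cancel₀ hpnorm.ne', one_smul]
      conv_lhs => rw [← h2]
      exact hbhom u hu_pos ‖p‖ hpnorm
    have h2 : ⟪u, z⟫ ≤ b u := by
      rw [hudef, real_inner_smul_left]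
      have h3 : ‖p‖⁻¹ * ⟪p, z⟫ ≤ ‖p‖⁻¹ * b p :=
        mul_le_mul_of_nonneg_left h1 (inv_nonneg.2 hpnorm.le)
      rw [hbp, inv_mul_cancel_left₀ hpnorm.ne'] at h3
      exact h3
    have h3 : a u - b u ≤ ⟪u, ya - z⟫ := by
      rw [inner_sub_right, hya2]
      linarith
    have h4 : ⟪u, ya - z⟫ ≤ ‖ya - z‖ := by
      have h5 := real_inner_le_norm u (ya - z)
      rw [hunorm, one_mul] at h5
      exact h5
    rw [dist_eq_norm]
    linarith
  have h5 : a u - b u ≤ Metric.infDist ya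
      {y : EuclideanSpace ℝ (Fin d) | ∀ p ∈ Pb, ⟪p, y⟫ ≤ b p} := by
    by_contra h
    push_neg at h
    obtain ⟨z, hz, hlt⟩ := (Metric.infDist_lt_iff hBne).1 h
    linarith [hstep z hz]
  exact h5.trans (Metric.infDist_le_hausdorffDist_of_mem hyaA hfin)

end Main

end Stmt5Aux

/-- Lemma A.2 (truncation lemma): the Hausdorff distance between two half-space
intersections induced by convex, positively homogeneous degree-1 functions over a
nonempty convex compact set of strictly positive prices equals the sup-distance of the
functions along normalized prices. -/
theorem stmt5 (d : ℕ) (hd : 2 ≤ d)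
    (a b : EuclideanSpace ℝ (Fin d) → ℝ)
    (haconv : ConvexOn ℝ (posOrthant d) a)
    (hbconv : ConvexOn ℝ (posOrthant d) b)
    (hahom : ∀ p ∈ posOrthant d, ∀ l : ℝ, 0 < l → a (l • p) = l * a p)
    (hbhom : ∀ p ∈ posOrthant d, ∀ l : ℝ, 0 < l → b (l • p) = l * b p)
    (Pb : Set (EuclideanSpace ℝ (Fin d))) (hPbne : Pb.Nonempty)
    (hPbconv : Convex ℝ Pb) (hPbcomp : IsCompact Pb) (hPbpos : Pb ⊆ posOrthant d) :
    Metric.hausdorffDist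
        {y : EuclideanSpace ℝ (Fin d) | ∀ p ∈ Pb, ⟪p, y⟫ ≤ a p}
        {y : EuclideanSpace ℝ (Fin d) | ∀ p ∈ Pb, ⟪p, y⟫ ≤ b p}
      = sSup ((fun p => |a (‖p‖⁻¹ • p) - b (‖p‖⁻¹ • p)|) '' Pb) := by
  have hd0 : 0 < d := by omega
  obtain ⟨p1, hp1⟩ := hPbne
  have hMbdd := Stmt5Aux.bddAbove_absdiff a b Pb haconv hbconv hd0 hPbcomp hPbpos
  set M := sSup ((fun p => |a (‖p‖⁻¹ • p) - b (‖p‖⁻¹ • p)|) '' Pb) with hMdef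
  have hM0 : 0 ≤ M := le_trans (abs_nonneg _) (le_csSup hMbdd ⟨p1, hp1, rfl⟩)
  have hswap : (fun p : EuclideanSpace ℝ (Fin d) => |b (‖p‖⁻¹ • p) - a (‖p‖⁻¹ • p)|)
      = (fun p => |a (‖p‖⁻¹ • p) - b (‖p‖⁻¹ • p)|) := funext fun p => abs_sub_comm _ _
  have hclose : ∀ y ∈ {y : EuclideanSpace ℝ (Fin d) | ∀ p ∈ Pb, ⟪p, y⟫ ≤ a p},
      ∃ z : EuclideanSpace ℝ (Fin d), (∀ p ∈ Pb, ⟪p, z⟫ ≤ b p) ∧ dist y z ≤ M :=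
    fun y hy => Stmt5Aux.exists_close a b Pb hd0 haconv hbconv hahom hbhom
      ⟨p1, hp1⟩ hPbconv hPbcomp hPbpos hy
  have hclose' : ∀ y ∈ {y : EuclideanSpace ℝ (Fin d) | ∀ p ∈ Pb, ⟪p, y⟫ ≤ b p},
      ∃ z : EuclideanSpace ℝ (Fin d), (∀ p ∈ Pb, ⟪p, z⟫ ≤ a p) ∧ dist y z ≤ M := by
    intro y hy
    have h := Stmt5Aux.exists_close b a Pb hd0 hbconv haconv hbhom hahom
      ⟨p1, hp1⟩ hPbconv hPbcomp hPbpos hy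
    rwa [hswap] at h
  have hfin : EMetric.hausdorffEdist
      {y : EuclideanSpace ℝ (Fin d) | ∀ p ∈ Pb, ⟪p, y⟫ ≤ a p}
      {y : EuclideanSpace ℝ (Fin d) | ∀ p ∈ Pb, ⟪p, y⟫ ≤ b p} ≠ ⊤ := by
    apply ne_top_of_le_ne_top (@ENNReal.ofReal_ne_top M)
    apply EMetric.hausdorffEdist_le_of_infEdist
    · intro x hx
      obtain ⟨z, hz, hdz⟩ := hclose x hx
      refine le_trans (EMetric.infEdist_le_edist_of_mem hz) ?_
      rw [edist_dist]
      exact ENNReal.ofReal_le_ofReal hdz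
    · intro x hx
      obtain ⟨z, hz, hdz⟩ := hclose' x hx
      refine le_trans (EMetric.infEdist_le_edist_of_mem hz) ?_
      rw [edist_dist]
      exact ENNReal.ofReal_le_ofReal hdz
  apply le_antisymm
  · apply Metric.hausdorffDist_le_of_infDist hM0
    · intro x hx
      obtain ⟨z, hz, hdz⟩ := hclose x hx
      exact (Metric.infDist_le_dist_of_mem
        (show z ∈ {y : EuclideanSpace ℝ (Fin d) | ∀ p ∈ Pb, ⟪p, y⟫ ≤ b p} from hz)).trans hdz
    · intro x hx
      obtain ⟨z, hz, hdz⟩ := hclose' x hx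
      exact (Metric.infDist_le_dist_of_mem
        (show z ∈ {y : EuclideanSpace ℝ (Fin d) | ∀ p ∈ Pb, ⟪p, y⟫ ≤ a p} from hz)).trans hdz
  · apply Real.sSup_le _ Metric.hausdorffDist_nonneg
    rintro x ⟨p, hp, rfl⟩
    rw [abs_sub_le_iff]
    constructor
    · exact Stmt5Aux.lower_bound a b Pb hd0 haconv hbconv hahom hbhom
        ⟨p1, hp1⟩ hPbpos hfin hp
    · have h := Stmt5Aux.lower_bound b a Pb hd0 hbconv haconv hbhom hahom
        ⟨p1, hp1⟩ hPbpos (by unfold EMetric.hausdorffEdist at hfin ⊢; rwa [Metric.hausdorffEDist_comm] at hfin) hp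
      rwa [Metric.hausdorffDist_comm] at h
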